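/- arXiv:2210.13320 — 4 statements merged into one kernel-verified Lean document; each statement's English description precedes it below -/
import Mathlib

section
/- Let G = (V, E) be a finite simple graph, T a spanning tree of G rooted at r, and A ⊆ V with A ≠ ∅ and A ≠ V. Suppose that the set of tree edges crossing the cut satisfies E(T) ∩ δ(A) = {e(v₁), …, e(vₖ)} for k distinct non-root vertices v₁, …, vₖ. Then |δ(A)| = Σ_{l=1}^{k} (−1)^{l−1} · 2^{l−1} · Σ_{S' ⊆ {1,…,k}, |S'| = l} |⋂_{i ∈ S'} δ(vᵢ↓)|. -/
/-- `desc T r v` is the set of descendants of `v` in the tree `T` rooted at `r`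
(vertices `u` such that `v` lies on every path from `r` to `u`), including `v` itself. -/
def desc {V : Type*} (T : SimpleGraph V) (r v : V) : Set V :=
  {u | ∀ p : T.Walk r u, p.IsPath → v ∈ p.support}

/-- `cut G A` is `δ(A)`: the set of edges of `G` with exactly one endpoint in `A`. -/
def cut {V : Type*} (G : SimpleGraph V) (A : Set V) : Set (Sym2 V) :=
  {e | e ∈ G.edgeSet ∧ ∃ x y, e = s(x, y) ∧ x ∈ A ∧ y ∉ A}

open Classical in
/-- `xorFam s A` is the symmetric difference `⊕_{i ∈ s} A i`:
an element belongs to it iff it belongs to an odd number of the sets `A i`. -/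
noncomputable def xorFam {ι α : Type*} (s : Finset ι) (A : ι → Set α) : Set α :=
  {x | Odd (s.filter (fun i => x ∈ A i)).card}

open SimpleGraph Finset

set_option linter.unusedSectionVars false

section Tree
variable {V : Type*} {T : SimpleGraph V} (hT : T.IsTree) (r : V)

noncomputable def thePath (u : V) : T.Walk r u := (hT.existsUnique_path r u).choose

variable {r}
include hT

lemma thePath_isPath (u : V) : (thePath hT r u).IsPath := (hT.existsUnique_path r u).choose_spec.1

lemma thePath_unique {u : V} {p : T.Walk r u} (hp : p.IsPath) : p = thePath hT r u :=
  ((hT.existsUnique_path r u).choose_spec.2 p hp)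

lemma mem_desc {u w : V} : u ∈ desc T r w ↔ w ∈ (thePath hT r u).support := by
  constructor
  · exact fun h => h _ (thePath_isPath hT u)
  · intro h p hp
    rwa [thePath_unique hT hp]

omit hT in
lemma end_not_mem_takeUntil [DecidableEq V] {u w : V} {p : T.Walk r u} (hp : p.IsPath)
    (h : w ∈ p.support) (hne : w ≠ u) : u ∉ (p.takeUntil w h).support := by
  intro hu
  have hspec := p.take_spec h
  have hnodup : p.support.Nodup := hp.support_nodup
  rw [← hspec, Walk.support_append, List.nodup_append] at hnodup
  exact hnodup.2.2 u hu u (Walk.end_mem_tail_support_of_ne hne _) rfl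

lemma desc_antisymm {u w : V} (h1 : u ∈ desc T r w) (h2 : w ∈ desc T r u) : u = w := by
  classical
  by_contra hne
  rw [mem_desc hT] at h1 h2
  have hPw : thePath hT r w = (thePath hT r u).takeUntil w h1 :=
    (thePath_unique hT ((thePath_isPath hT u).takeUntil h1)).symm
  have := end_not_mem_takeUntil (thePath_isPath hT u) h1 (fun h => hne h.symm)
  rw [← hPw] at this
  exact this h2

lemma self_mem_desc (x : V) : x ∈ desc T r x := fun p _ => p.end_mem_support

lemma thePath_root_nil : thePath hT r r = Walk.nil := (thePath_unique hT Walk.IsPath.nil).symm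

lemma mem_thePath_root {c : V} (h : c ∈ (thePath hT r r).support) : c = r := by
  rw [thePath_root_nil hT] at h
  simpa using h

lemma root_mem_desc_iff {w : V} : r ∈ desc T r w ↔ w = r := by
  rw [mem_desc hT, thePath_root_nil hT]
  simp [eq_comm]

variable {π : V → V} (hπ : ∀ x, x ≠ r → T.Adj x (π x) ∧ x ∈ desc T r (π x))
include hπ

lemma not_mem_thePath_parent {x : V} (hx : x ≠ r) : x ∉ (thePath hT r (π x)).support := by
  classical
  intro h
  have hPx : thePath hT r x = (thePath hT r (π x)).takeUntil x h :=
    (thePath_unique hT ((thePath_isPath hT (π x)).takeUntil h)).symm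
  have hmem : π x ∈ (thePath hT r x).support := (mem_desc hT).1 (hπ x hx).2
  rw [hPx] at hmem
  exact end_not_mem_takeUntil (thePath_isPath hT (π x)) h (hπ x hx).1.ne hmem

lemma thePath_eq_concat {x : V} (hx : x ≠ r) :
    thePath hT r x = (thePath hT r (π x)).concat (hπ x hx).1.symm := by
  refine (thePath_unique hT ?_).symm
  rw [Walk.isPath_def, Walk.support_concat, List.nodup_append]
  refine ⟨(thePath_isPath hT (π x)).support_nodup, List.nodup_singleton x, ?_⟩
  intro a ha b hb hab
  rw [List.mem_singleton] at hb
  subst hb hab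
  exact not_mem_thePath_parent hT hπ hx ha

lemma support_thePath_parent {x : V} (hx : x ≠ r) :
    (thePath hT r x).support = (thePath hT r (π x)).support ++ [x] := by
  rw [thePath_eq_concat hT hπ hx, Walk.support_concat]

lemma desc_step {x w : V} (hx : x ≠ r) (hw : w ≠ x) :
    x ∈ desc T r w ↔ π x ∈ desc T r w := by
  rw [mem_desc hT, mem_desc hT, support_thePath_parent hT hπ hx]
  simp [hw]

lemma parent_not_mem_desc {x : V} (hx : x ≠ r) : π x ∉ desc T r x := by
  rw [mem_desc hT]
  exact not_mem_thePath_parent hT hπ hx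

end Tree

lemma mem_cut {V : Type*} {G : SimpleGraph V} {A : Set V} {x y : V} :
    s(x, y) ∈ cut G A ↔ s(x, y) ∈ G.edgeSet ∧ ((x ∈ A ∧ y ∉ A) ∨ (y ∈ A ∧ x ∉ A)) := by
  constructor
  · rintro ⟨he, a, b, hab, ha, hb⟩
    refine ⟨he, ?_⟩
    rw [Sym2.eq_iff] at hab
    rcases hab with ⟨rfl, rfl⟩ | ⟨rfl, rfl⟩
    · exact Or.inl ⟨ha, hb⟩
    · exact Or.inr ⟨ha, hb⟩
  · rintro ⟨he, ⟨ha, hb⟩ | ⟨ha, hb⟩⟩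
    · exact ⟨he, x, y, rfl, ha, hb⟩
    · exact ⟨he, y, x, Sym2.eq_swap, ha, hb⟩

lemma parity_xor {ι : Type*} [DecidableEq ι] (s : Finset ι) (P Q : ι → Prop)
    [DecidablePred P] [DecidablePred Q] :
    Even ((s.filter fun i => ¬(P i ↔ Q i)).card) ↔
      (Even (s.filter P).card ↔ Even (s.filter Q).card) := by
  induction s using Finset.induction with
  | empty => simp
  | @insert a s ha ih =>
    have hni : ∀ (R : ι → Prop) (_ : DecidablePred R), a ∉ s.filter R :=
      fun R _ h => ha (Finset.mem_of_mem_filter a h)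
    rw [Finset.filter_insert, Finset.filter_insert, Finset.filter_insert]
    by_cases hp : P a <;> by_cases hq : Q a <;>
      simp [hp, hq, Finset.card_insert_of_notMem (hni _ _), Nat.even_add_one, ih,
        ← Nat.not_even_iff_odd] <;>
      tauto

lemma binom_parity (k m : ℕ) (hm : m ≤ k) :
    ∑ l ∈ Finset.Icc 1 k, (-1 : ℤ) ^ (l - 1) * 2 ^ (l - 1) * (m.choose l : ℤ) =
      if Odd m then 1 else 0 := by
  have h2 : (-2 : ℤ) ≠ 0 := by norm_num
  apply mul_left_cancel₀ h2
  have key : ∑ l ∈ Finset.range (k + 1), (-2 : ℤ) ^ l * (m.choose l : ℤ) = (-1) ^ m := by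
    rw [← Finset.sum_subset (Finset.range_subset_range.2 (Nat.succ_le_succ hm))
      (fun x _ hx => by
        rw [Nat.choose_eq_zero_of_lt (by simpa using hx), Nat.cast_zero, mul_zero])]
    have := add_pow (-2 : ℤ) 1 m
    simp only [one_pow, mul_one] at this
    rw [show ((-1 : ℤ)) ^ m = ((-2 : ℤ) + 1) ^ m by norm_num, this]
  have hsplit : Finset.range (k + 1) = insert 0 (Finset.Icc 1 k) := by
    ext x; simp [Nat.lt_succ_iff]; omega
  rw [hsplit, Finset.sum_insert (by simp)] at key
  simp only [pow_zero, Nat.choose_zero_right, Nat.cast_one, one_mul] at key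
  have hterm : ∀ l ∈ Finset.Icc 1 k,
      (-2 : ℤ) * ((-1) ^ (l - 1) * 2 ^ (l - 1) * (m.choose l : ℤ)) =
        (-2) ^ l * (m.choose l : ℤ) := by
    intro l hl
    rw [Finset.mem_Icc] at hl
    have : (-2 : ℤ) ^ l = ((-1) ^ (l - 1) * 2 ^ (l - 1)) * (-2) := by
      conv_lhs => rw [show l = (l - 1) + 1 by omega]
      rw [pow_succ, neg_pow]
    rw [this]; ring
  rw [Finset.mul_sum, Finset.sum_congr rfl hterm]
  have hfin : ∑ l ∈ Finset.Icc 1 k, (-2 : ℤ) ^ l * (m.choose l : ℤ) = (-1) ^ m - 1 := by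
    linarith [key]
  rw [hfin]
  rcases Nat.even_or_odd m with he | ho
  · rw [if_neg (by simpa [Nat.not_odd_iff_even] using he), he.neg_one_pow]; ring
  · rw [if_pos ho, ho.neg_one_pow]; ring

set_option maxHeartbeats 1000000 in
theorem stmt0 {V : Type*} [Fintype V] (G T : SimpleGraph V) (hT : T.IsTree)
    (hTG : T ≤ G) (r : V) (A : Set V) (hA₁ : A ≠ ∅) (hA₂ : A ≠ Set.univ)
    (k : ℕ) (v : Fin k → V) (hinj : Function.Injective v) (hroot : ∀ i, v i ≠ r)
    (π : V → V) (hπ : ∀ x, x ≠ r → T.Adj x (π x) ∧ x ∈ desc T r (π x))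
    (hcross : T.edgeSet ∩ cut G A = Set.range (fun i => s(v i, π (v i)))) :
    ((cut G A).ncard : ℤ) =
      ∑ l ∈ Finset.Icc 1 k, (-1 : ℤ) ^ (l - 1) * 2 ^ (l - 1) *
        ∑ S ∈ Finset.univ.filter (fun S : Finset (Fin k) => S.card = l),
          ((⋂ i ∈ S, cut G (desc T r (v i))).ncard : ℤ) := by
  classical
  set pf : V → ℕ := fun x => (Finset.univ.filter fun i => x ∈ desc T r (v i)).card with hpf
  -- Step A: crossing characterization for tree edges
  have SB2 : ∀ x, x ≠ r → (¬((x ∈ A) ↔ (π x ∈ A)) ↔ ∃ i, v i = x) := by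
    intro x hx
    constructor
    · intro hne
      have hcut : s(x, π x) ∈ cut G A := by
        rw [mem_cut]
        exact ⟨(hTG (hπ x hx).1 : G.Adj x (π x)), by tauto⟩
      have hmem : s(x, π x) ∈ T.edgeSet ∩ cut G A := ⟨(hπ x hx).1, hcut⟩
      rw [hcross] at hmem
      obtain ⟨i, hi⟩ := hmem
      simp only at hi
      rw [Sym2.eq_iff] at hi
      rcases hi with ⟨h1, h2⟩ | ⟨h1, h2⟩
      · exact ⟨i, h1⟩
      · refine ⟨i, ?_⟩
        have hd1 : x ∈ desc T r (v i) := by rw [h1]; exact (hπ x hx).2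
        have hd2 : v i ∈ desc T r x := by rw [← h2]; exact (hπ (v i) (hroot i)).2
        exact (desc_antisymm hT hd1 hd2).symm
    · rintro ⟨i, hi⟩
      have hmem : s(v i, π (v i)) ∈ T.edgeSet ∩ cut G A := by
        rw [hcross]; exact ⟨i, rfl⟩
      rw [hi] at hmem
      have := (mem_cut).1 hmem.2
      tauto
  -- Step B: parity step along a tree edge
  have hc_le : ∀ x : V, (Finset.univ.filter fun i => v i = x).card ≤ 1 := by
    intro x
    refine Finset.card_le_one.2 fun i hi j hj => hinj ?_
    rw [(Finset.mem_filter.1 hi).2, (Finset.mem_filter.1 hj).2]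
  have SB1 : ∀ x, x ≠ r →
      pf x = pf (π x) + (Finset.univ.filter fun i => v i = x).card := by
    intro x hx
    have hsetu : (Finset.univ.filter fun i => x ∈ desc T r (v i)) =
        (Finset.univ.filter fun i => π x ∈ desc T r (v i)) ∪
          (Finset.univ.filter fun i => v i = x) := by
      ext i
      simp only [Finset.mem_filter, Finset.mem_union, Finset.mem_univ, true_and]
      by_cases hvi : v i = x
      · subst hvi
        simp [self_mem_desc hT]
      · rw [desc_step hT hπ hx hvi]
        simp [hvi]
    have hdisj : Disjoint (Finset.univ.filter fun i => π x ∈ desc T r (v i))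
        (Finset.univ.filter fun i => v i = x) := by
      rw [Finset.disjoint_left]
      intro i hi1 hi2
      have h1 := (Finset.mem_filter.1 hi1).2
      have h2 := (Finset.mem_filter.1 hi2).2
      rw [h2] at h1
      exact parent_not_mem_desc hT hπ hx h1
    rw [hpf]
    simp only
    rw [hsetu, Finset.card_union_of_disjoint hdisj]
  -- Step C: global parity invariant, by induction on path length
  have pf_root : pf r = 0 := by
    rw [hpf]
    simp only
    rw [Finset.card_eq_zero, Finset.filter_eq_empty_iff]
    intro i _
    rw [root_mem_desc_iff hT]
    exact hroot i
  have C1 : ∀ n (x : V), (thePath hT r x).length ≤ n →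
      (((x ∈ A) ↔ (r ∈ A)) ↔ Even (pf x)) := by
    intro n
    induction n with
    | zero =>
      intro x hx
      have hxr : r = x := Walk.eq_of_length_eq_zero (Nat.le_zero.1 hx)
      subst hxr
      simp [pf_root]
    | succ n ih =>
      intro x hx
      by_cases hxr : x = r
      · subst hxr
        simp [pf_root]
      · have hlen : (thePath hT r (π x)).length ≤ n := by
          have hcc := thePath_eq_concat hT hπ hxr
          rw [hcc, Walk.length_concat] at hx
          omega
        have IH := ih (π x) hlen
        have h1 := SB1 x hxr
        have h2 := SB2 x hxr
        rcases Nat.le_one_iff_eq_zero_or_eq_one.1 (hc_le x) with hc | hc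
        · have hxA : (x ∈ A) ↔ (π x ∈ A) := by
            by_contra hne
            obtain ⟨i, hi⟩ := h2.1 hne
            have : i ∈ Finset.univ.filter fun i => v i = x :=
              Finset.mem_filter.2 ⟨Finset.mem_univ _, hi⟩
            rw [Finset.card_eq_zero] at hc
            rw [hc] at this
            exact absurd this (Finset.notMem_empty i)
          rw [h1, hc, add_zero]
          rw [← IH]
          tauto
        · have hxA : ¬((x ∈ A) ↔ (π x ∈ A)) := by
            obtain ⟨i, hi⟩ := Finset.card_eq_one.1 hc
            have hii : i ∈ Finset.univ.filter fun i => v i = x := by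
              rw [hi]; exact Finset.mem_singleton_self i
            exact h2.2 ⟨i, (Finset.mem_filter.1 hii).2⟩
          rw [h1, hc, Nat.even_add_one]
          rw [← IH]
          tauto
  have C1' : ∀ x : V, ((x ∈ A) ↔ (r ∈ A)) ↔ Even (pf x) :=
    fun x => C1 (thePath hT r x).length x le_rfl
  -- Step D: the cut equals the xor of the descendant cuts
  have hcuteq : cut G A = xorFam Finset.univ (fun i => cut G (desc T r (v i))) := by
    ext e
    induction e using Sym2.ind with
    | _ x y =>
      simp only [xorFam, Set.mem_setOf_eq]
      rw [mem_cut]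
      by_cases he : s(x, y) ∈ G.edgeSet
      · have hfe : (Finset.univ.filter fun i => s(x, y) ∈ cut G (desc T r (v i))) =
            Finset.univ.filter fun i =>
              ¬((x ∈ desc T r (v i)) ↔ (y ∈ desc T r (v i))) := by
          apply Finset.filter_congr
          intro i _
          rw [mem_cut]
          simp only [he, true_and]
          tauto
        rw [hfe, ← Nat.not_even_iff_odd, parity_xor]
        have hx := C1' x
        have hy := C1' y
        constructor
        · rintro ⟨-, h⟩
          rw [← hx, ← hy]
          tauto
        · intro h
          rw [← hx, ← hy] at h
          exact ⟨he, by tauto⟩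
      · have hfe : (Finset.univ.filter fun i => s(x, y) ∈ cut G (desc T r (v i))) = ∅ := by
          rw [Finset.filter_eq_empty_iff]
          intro i _
          rw [mem_cut]
          tauto
        rw [hfe]
        simp [he]
  -- Step E: counting
  have hncard : ∀ s : Set (Sym2 V), (s.ncard : ℤ) = ∑ e : Sym2 V, if e ∈ s then (1 : ℤ) else 0 := by
    intro s
    have h1 : s.ncard = (Finset.univ.filter (· ∈ s)).card := by
      rw [← Set.ncard_coe_finset]
      congr 1
      ext e; simp
    rw [h1, Finset.card_filter]
    push_cast
    rfl
  have hmle : ∀ e : Sym2 V,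
      (Finset.univ.filter fun i => e ∈ cut G (desc T r (v i))).card ≤ k := by
    intro e
    calc (Finset.univ.filter fun i => e ∈ cut G (desc T r (v i))).card
        ≤ (Finset.univ : Finset (Fin k)).card := Finset.card_filter_le _ _
      _ = k := by simp
  have hRHS : ∀ l ∈ Finset.Icc 1 k,
      (∑ S ∈ Finset.univ.filter (fun S : Finset (Fin k) => S.card = l),
          ((⋂ i ∈ S, cut G (desc T r (v i))).ncard : ℤ)) =
        ∑ e : Sym2 V,
          ((Nat.choose (Finset.univ.filter fun i => e ∈ cut G (desc T r (v i))).card l : ℤ)) := by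
    intro l _
    rw [Finset.sum_congr rfl (fun S _ => hncard _), Finset.sum_comm]
    refine Finset.sum_congr rfl fun e _ => ?_
    have hsub : ∀ S ∈ Finset.univ.filter (fun S : Finset (Fin k) => S.card = l),
        (if e ∈ ⋂ i ∈ S, cut G (desc T r (v i)) then (1 : ℤ) else 0) =
          if S ⊆ Finset.univ.filter (fun i => e ∈ cut G (desc T r (v i))) then 1 else 0 := by
      intro S _
      refine if_congr ?_ rfl rfl
      rw [Set.mem_iInter₂]
      constructor
      · intro h i hiS
        exact Finset.mem_filter.2 ⟨Finset.mem_univ _, h i hiS⟩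
      · intro h i hiS
        exact (Finset.mem_filter.1 (h hiS)).2
    rw [Finset.sum_congr rfl hsub, Finset.sum_boole]
    have hps : ((Finset.univ.filter (fun S : Finset (Fin k) => S.card = l)).filter
          (· ⊆ Finset.univ.filter (fun i => e ∈ cut G (desc T r (v i))))) =
        (Finset.univ.filter (fun i => e ∈ cut G (desc T r (v i)))).powersetCard l := by
      ext S
      simp [Finset.mem_powersetCard, and_comm]
    rw [hps, Finset.card_powersetCard]
  rw [hcuteq, hncard]
  rw [show ∑ l ∈ Finset.Icc 1 k, (-1 : ℤ) ^ (l - 1) * 2 ^ (l - 1) *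
        ∑ S ∈ Finset.univ.filter (fun S : Finset (Fin k) => S.card = l),
          ((⋂ i ∈ S, cut G (desc T r (v i))).ncard : ℤ) =
      ∑ l ∈ Finset.Icc 1 k, (-1 : ℤ) ^ (l - 1) * 2 ^ (l - 1) *
        ∑ e : Sym2 V,
          ((Nat.choose (Finset.univ.filter fun i => e ∈ cut G (desc T r (v i))).card l : ℤ)) from
    Finset.sum_congr rfl fun l hl => by rw [hRHS l hl]]
  rw [show ∑ l ∈ Finset.Icc 1 k, (-1 : ℤ) ^ (l - 1) * 2 ^ (l - 1) *
        ∑ e : Sym2 V,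
          ((Nat.choose (Finset.univ.filter fun i => e ∈ cut G (desc T r (v i))).card l : ℤ)) =
      ∑ e : Sym2 V, ∑ l ∈ Finset.Icc 1 k, (-1 : ℤ) ^ (l - 1) * 2 ^ (l - 1) *
          ((Nat.choose (Finset.univ.filter fun i => e ∈ cut G (desc T r (v i))).card l : ℤ)) by
    rw [Finset.sum_comm]
    exact Finset.sum_congr rfl fun l _ => Finset.mul_sum _ _ _]
  refine Finset.sum_congr rfl fun e _ => ?_
  rw [binom_parity k _ (hmle e)]
  simp only [xorFam, Set.mem_setOf_eq]
end

section
/- Let G = (V, E) be a finite simple graph, T a spanning tree of G rooted at r, and A ⊆ V. If δ(A) ∩ E(T) = {e(v₁), e(v₂), …, e(vₖ)} for k distinct non-root vertices v₁, …, vₖ, then either A or V \ A equals v₁↓ ⊕ v₂↓ ⊕ ⋯ ⊕ vₖ↓. -/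
private lemma logic_aux {a a' b b' c : Prop} (h1 : (a ↔ ¬a') ↔ (b ↔ ¬b'))
    (h2 : (a' ↔ b') ↔ c) : (a ↔ b) ↔ c := by tauto

private lemma logic_aux2 {p q p' q' : Prop} (h : (p ↔ q) ↔ (p' ↔ q')) (hn : ¬(p' ↔ q')) :
    ¬p ↔ q := by tauto

theorem stmt7 {V : Type*} [Fintype V] (G T : SimpleGraph V) (hT : T.IsTree)
    (hTG : T ≤ G) (r : V)
    (π : V → V) (hπ : ∀ x, x ≠ r → T.Adj x (π x) ∧ x ∈ desc T r (π x))
    (A : Set V) (k : ℕ) (v : Fin k → V) (hinj : Function.Injective v)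
    (hroot : ∀ i, v i ≠ r)
    (hcross : cut G A ∩ T.edgeSet = Set.range (fun i => s(v i, π (v i)))) :
    A = xorFam Finset.univ (fun i => desc T r (v i)) ∨
      Set.univ \ A = xorFam Finset.univ (fun i => desc T r (v i)) := by
  classical
  -- the canonical path from r to x
  let P : ∀ x : V, T.Walk r x := fun x => (hT.existsUnique_path r x).exists.choose
  have hP : ∀ x, (P x).IsPath := fun x => (hT.existsUnique_path r x).exists.choose_spec
  have hPu : ∀ x (q : T.Walk r x), q.IsPath → q = P x := by
    intro x q hq
    exact ((hT.existsUnique_path r x).unique hq (hP x))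
  have desc_iff : ∀ u w, u ∈ desc T r w ↔ w ∈ (P u).support := by
    intro u w
    constructor
    · intro h; exact h (P u) (hP u)
    · intro h q hq; rwa [hPu u q hq]
  -- support of P x decomposes via the parent
  have supp_eq : ∀ x, x ≠ r → (P x).support = (P (π x)).support ++ [x] := by
    intro x hx
    have hmem : π x ∈ (P x).support := (hπ x hx).2 (P x) (hP x)
    have hspec := (P x).take_spec hmem
    have h1 : ((P x).takeUntil (π x) hmem).IsPath := (hP x).takeUntil hmem
    have h2 : ((P x).dropUntil (π x) hmem).IsPath := (hP x).dropUntil hmem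
    have hadj : T.Adj (π x) x := (hπ x hx).1.symm
    have hW : (SimpleGraph.Walk.cons hadj SimpleGraph.Walk.nil).IsPath := by
      simp [SimpleGraph.Walk.isPath_iff_eq_nil, hadj.ne]
    have hdrop : (P x).dropUntil (π x) hmem = SimpleGraph.Walk.cons hadj SimpleGraph.Walk.nil :=
      congrArg Subtype.val (hT.IsAcyclic.path_unique ⟨_, h2⟩ ⟨_, hW⟩)
    have htake : (P x).takeUntil (π x) hmem = P (π x) := hPu _ _ h1
    calc (P x).support = (((P x).takeUntil (π x) hmem).append ((P x).dropUntil (π x) hmem)).support := by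
          rw [hspec]
      _ = (P (π x)).support ++ [x] := by
          rw [SimpleGraph.Walk.support_append, hdrop, htake]
          simp
  have len_eq : ∀ x, x ≠ r → (P x).length = (P (π x)).length + 1 := by
    intro x hx
    have h1 := congrArg List.length (supp_eq x hx)
    simp [SimpleGraph.Walk.length_support] at h1
    omega
  have desc_self : ∀ x, x ∈ desc T r x := fun x p _ => p.end_mem_support
  have notdesc : ∀ x, x ≠ r → π x ∉ desc T r x := by
    intro x hx h
    rw [desc_iff] at h
    have hnd : ((P x).support).Nodup := (hP x).support_nodup
    rw [supp_eq x hx] at hnd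
    have := List.disjoint_of_nodup_append hnd
    exact this h (by simp)
  have cross : ∀ x, x ≠ r → ∀ w, w ≠ x → (x ∈ desc T r w ↔ π x ∈ desc T r w) := by
    intro x hx w hw
    rw [desc_iff, desc_iff, supp_eq x hx]
    simp [hw]
  set X := xorFam Finset.univ (fun i => desc T r (v i)) with hX
  have memX : ∀ u, u ∈ X ↔ Odd (Finset.univ.filter (fun i => u ∈ desc T r (v i))).card := by
    intro u; rw [hX]; rfl
  -- flip lemma for X
  have flipX : ∀ x, x ≠ r → ((x ∈ X ↔ π x ∉ X) ↔ x ∈ Set.range v) := by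
    intro x hx
    by_cases hr : x ∈ Set.range v
    · obtain ⟨j, hj⟩ := hr
      have hset : (Finset.univ.filter (fun i => x ∈ desc T r (v i)))
          = insert j (Finset.univ.filter (fun i => π x ∈ desc T r (v i))) := by
        ext i
        simp only [Finset.mem_filter, Finset.mem_insert, Finset.mem_univ, true_and]
        by_cases hij : i = j
        · subst hij; simp [hj, desc_self]
        · have : v i ≠ x := fun h => hij (hinj (h.trans hj.symm))
          rw [cross x hx (v i) this]
          tauto
      have hjmem : j ∉ Finset.univ.filter (fun i => π x ∈ desc T r (v i)) := by
        simp only [Finset.mem_filter, Finset.mem_univ, true_and, hj]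
        exact notdesc x hx
      simp only [memX, hset, Finset.card_insert_of_notMem hjmem]
      rw [Nat.odd_add_one]
      constructor
      · intro _; exact ⟨j, hj⟩
      · intro _; tauto
    · have hset : (Finset.univ.filter (fun i => x ∈ desc T r (v i)))
          = Finset.univ.filter (fun i => π x ∈ desc T r (v i)) := by
        ext i
        simp only [Finset.mem_filter, Finset.mem_univ, true_and]
        have : v i ≠ x := fun h => hr ⟨i, h⟩
        rw [cross x hx (v i) this]
      simp only [memX, hset]
      constructor
      · intro h; exact (iff_not_self h).elim
      · intro h; exact absurd h hr
  -- flip lemma for A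
  have flipA : ∀ x, x ≠ r → ((x ∈ A ↔ π x ∉ A) ↔ x ∈ Set.range v) := by
    intro x hx
    have hadj : T.Adj x (π x) := (hπ x hx).1
    have hcut : s(x, π x) ∈ cut G A ↔ ((x ∈ A ∧ π x ∉ A) ∨ (π x ∈ A ∧ x ∉ A)) := by
      constructor
      · rintro ⟨-, a, b, hab, ha, hb⟩
        rw [Sym2.eq_iff] at hab
        rcases hab with ⟨h1, h2⟩ | ⟨h1, h2⟩
        · left; exact ⟨h1 ▸ ha, h2 ▸ hb⟩
        · right; exact ⟨h2 ▸ ha, h1 ▸ hb⟩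
      · rintro (⟨ha, hb⟩ | ⟨ha, hb⟩)
        · exact ⟨hTG hadj, x, π x, rfl, ha, hb⟩
        · exact ⟨hTG hadj, π x, x, Sym2.eq_swap, ha, hb⟩
    have hrange : s(x, π x) ∈ Set.range (fun i => s(v i, π (v i))) ↔ x ∈ Set.range v := by
      constructor
      · rintro ⟨i, hi⟩
        simp only at hi
        rw [Sym2.eq_iff] at hi
        rcases hi with ⟨h1, h2⟩ | ⟨h1, h2⟩
        · exact ⟨i, h1⟩
        · exfalso
          have := (hπ (v i) (hroot i)).2
          rw [h2, h1] at this
          exact notdesc x hx this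
      · rintro ⟨i, hi⟩
        exact ⟨i, by simp only []; rw [hi]⟩
    have hmem : s(x, π x) ∈ cut G A ∩ T.edgeSet ↔ x ∈ Set.range v := by
      rw [hcross, hrange]
    have htedge : s(x, π x) ∈ T.edgeSet := hadj
    rw [← hmem]
    simp only [Set.mem_inter_iff, htedge, and_true, hcut]
    tauto
  -- propagate along the tree
  have key : ∀ n, ∀ x, (P x).length ≤ n → ((x ∈ A ↔ x ∈ X) ↔ (r ∈ A ↔ r ∈ X)) := by
    intro n
    induction n with
    | zero =>
      intro x hlen
      have : r = x := SimpleGraph.Walk.eq_of_length_eq_zero (Nat.le_zero.mp hlen)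
      subst this; exact Iff.rfl
    | succ n ih =>
      intro x hlen
      by_cases hx : x = r
      · subst hx; exact Iff.rfl
      · have h1 := flipA x hx
        have h2 := flipX x hx
        have h3 := ih (π x) (by have := len_eq x hx; omega)
        exact logic_aux (h1.trans h2.symm) h3
  have main : ∀ x, (x ∈ A ↔ x ∈ X) ↔ (r ∈ A ↔ r ∈ X) := fun x => key (P x).length x le_rfl
  by_cases h : (r ∈ A ↔ r ∈ X)
  · left; ext x; exact (main x).mpr h
  · right; ext x
    simp only [Set.mem_diff, Set.mem_univ, true_and]
    exact logic_aux2 (main x) h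
end

section
/- Let G = (V, E) be a finite simple graph, T a spanning tree of G rooted at r, and S = {x₁, x₂, …, xₖ} a set of k ≥ 3 distinct non-root vertices. Assume: (i) there exists x' ∈ S such that every y' ∈ S satisfies y' ∈ x'↓ (all vertices of S are descendants of x'); and (ii) for every x'' ∈ S there exists y'' ∈ S such that y'' is not on the tree path from r to x''. Then δ(x₁↓) ∩ δ(x₂↓) ∩ ⋯ ∩ δ(xₖ↓) = ∅. -/
theorem stmt12 {V : Type*} [Fintype V] (G T : SimpleGraph V) (hT : T.IsTree)
    (hTG : T ≤ G) (r : V) (k : ℕ) (hk : 3 ≤ k) (x : Fin k → V)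
    (hinj : Function.Injective x) (hroot : ∀ i, x i ≠ r)
    (h₁ : ∃ i : Fin k, ∀ j : Fin k, x j ∈ desc T r (x i))
    (h₂ : ∀ i : Fin k, ∃ j : Fin k, x i ∉ desc T r (x j)) :
    ⋂ i, cut G (desc T r (x i)) = ∅ := by
  classical
  ext e
  simp only [Set.mem_iInter, Set.mem_empty_iff_false, iff_false]
  intro he
  obtain ⟨i0, hi0⟩ := h₁
  -- transitivity of descendance
  have htrans : ∀ (u : V) (j : Fin k), u ∈ desc T r (x j) → u ∈ desc T r (x i0) := by
    intro u j hu p hp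
    have hjp : x j ∈ p.support := hu p hp
    have := hi0 j (p.takeUntil (x j) hjp) (hp.takeUntil hjp)
    exact p.support_takeUntil_subset hjp this
  obtain ⟨-, a, b, heab, ha, hb⟩ := he i0
  have ha' : ∀ j, a ∈ desc T r (x j) := by
    intro j
    obtain ⟨-, u, v, huv, hu, hv⟩ := he j
    rw [heab] at huv
    rcases Sym2.eq_iff.mp huv with ⟨h1, h2⟩ | ⟨h1, h2⟩
    · rwa [h1]
    · exact absurd (htrans b j (h2 ▸ hu)) hb
  obtain ⟨P, hP, -⟩ := hT.existsUnique_path r a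
  have hsup : ∀ j, x j ∈ P.support := fun j => ha' j P hP
  have : Nonempty (Fin k) := ⟨i0⟩
  obtain ⟨m, hm⟩ := Finite.exists_max (fun j => P.support.idxOf (x j))
  obtain ⟨j, hj⟩ := h₂ m
  rw [desc, Set.mem_setOf_eq] at hj
  push_neg at hj
  obtain ⟨q, hq, hqj⟩ := hj
  set Q := P.takeUntil (x m) (hsup m) with hQ
  have hQpath : Q.IsPath := hP.takeUntil (hsup m)
  obtain ⟨p0, -, hp0⟩ := hT.existsUnique_path r (x m)
  have hqQ : q = Q := (hp0 q hq).trans (hp0 Q hQpath).symm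
  have hjQ : x j ∉ Q.support := hqQ ▸ hqj
  have hsplit : P.support = Q.support ++ (P.dropUntil (x m) (hsup m)).support.tail := by
    conv_lhs => rw [← P.take_spec (hsup m)]
    rw [SimpleGraph.Walk.support_append]
  have hmQ : x m ∈ Q.support := SimpleGraph.Walk.end_mem_support Q
  have h1 : P.support.idxOf (x m) < Q.support.length := by
    rw [hsplit, List.idxOf_append_of_mem hmQ]
    exact List.idxOf_lt_length_iff.2 hmQ
  have h2 : Q.support.length ≤ P.support.idxOf (x j) := by
    rw [hsplit, List.idxOf_append_of_notMem hjQ]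
    exact Nat.le_add_right _ _
  exact absurd (hm j) (by omega)
end

section
/- Let G = (V, E) be a finite simple graph, T a spanning tree of G rooted at r, and S = {x₁, x₂, …, xₖ} a set of k ≥ 3 distinct non-root vertices. Assume: (i) there exist x, y ∈ S with x ≠ y and x↓ ∩ y↓ ≠ ∅; and (ii) for every x' ∈ S there exists y' ∈ S with y' ∉ x'↓. Then there exists a ∈ S such that ⋂_{x ∈ S} δ(x↓) = ⋂_{x ∈ S \ {a}} δ(x↓); in particular |⋂_{x ∈ S} δ(x↓)| equals the (k−1)-wise intersection cardinality over S \ {a}. -/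
section helpers
open SimpleGraph
variable {V : Type*} {T : SimpleGraph V} {r : V}

private lemma mem_takeUntil_or' {V : Type*} [DecidableEq V] {G : SimpleGraph V} {a b : V}
    (p : G.Walk a b) (v w : V) (hv : v ∈ p.support) (hw : w ∈ p.support) :
    w ∈ (p.takeUntil v hv).support ∨ v ∈ (p.takeUntil w hw).support := by
  induction p with
  | nil =>
    simp only [Walk.support_nil, List.mem_singleton] at hv hw
    subst hv; subst hw
    left; exact Walk.end_mem_support _
  | @cons a c b h q ih =>
    by_cases hva : a = v
    · subst hva; right; exact Walk.start_mem_support _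
    by_cases hwa : a = w
    · subst hwa; left; exact Walk.start_mem_support _
    have hv' : v ∈ q.support := by
      cases hv with
      | head => exact absurd rfl hva
      | tail _ h => exact h
    have hw' : w ∈ q.support := by
      cases hw with
      | head => exact absurd rfl hwa
      | tail _ h => exact h
    have hvt : (Walk.cons h q).takeUntil v hv = Walk.cons h (q.takeUntil v hv') := by
      simp [Walk.takeUntil, hva]
    have hwt : (Walk.cons h q).takeUntil w hw = Walk.cons h (q.takeUntil w hw') := by
      simp [Walk.takeUntil, hwa]
    rcases ih hv' hw' with h1 | h1
    · left; rw [hvt, Walk.support_cons]; exact List.mem_cons_of_mem _ h1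
    · right; rw [hwt, Walk.support_cons]; exact List.mem_cons_of_mem _ h1

private lemma mem_desc_self' (v : V) : v ∈ desc T r v := fun p _ => p.end_mem_support

private lemma mem_desc_of_path' (hT : T.IsTree) {u v : V} {p : T.Walk r u} (hp : p.IsPath)
    (hv : v ∈ p.support) : u ∈ desc T r v := by
  intro q hq
  rwa [(hT.existsUnique_path r u).unique hq hp]

private lemma desc_subset' [DecidableEq V] {v w : V} (h : w ∈ desc T r v) :
    desc T r w ⊆ desc T r v := by
  intro u hu p hp
  have hw : w ∈ p.support := hu p hp
  have := h (p.takeUntil w hw) (hp.takeUntil hw)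
  exact p.support_takeUntil_subset hw this

private lemma desc_antisymm' [DecidableEq V] (hT : T.IsTree) {v w : V}
    (hvw : v ∈ desc T r w) (hwv : w ∈ desc T r v) : v = w := by
  obtain ⟨p, hp, hup⟩ := hT.existsUnique_path r v
  have hw : w ∈ p.support := hvw p hp
  have hv' : v ∈ (p.takeUntil w hw).support := hwv _ (hp.takeUntil hw)
  have hq : ((p.takeUntil w hw).takeUntil v hv').IsPath := (hp.takeUntil hw).takeUntil hv'
  have heq : (p.takeUntil w hw).takeUntil v hv' = p := hup _ hq
  have h1 : ((p.takeUntil w hw).takeUntil v hv').length ≤ (p.takeUntil w hw).length :=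
    Walk.length_takeUntil_le _ hv'
  have h2 : (p.takeUntil w hw).length ≤ p.length := Walk.length_takeUntil_le _ hw
  rw [heq] at h1
  have h5 : (p.takeUntil w hw).length + (p.dropUntil w hw).length = p.length := by
    rw [← Walk.length_append, p.take_spec hw]
  have h6 : (p.dropUntil w hw).length = 0 := by omega
  exact (Walk.eq_of_length_eq_zero h6).symm

private lemma desc_laminar' [DecidableEq V] (hT : T.IsTree) {v w : V}
    (h : (desc T r v ∩ desc T r w).Nonempty) :
    desc T r v ⊆ desc T r w ∨ desc T r w ⊆ desc T r v := by
  obtain ⟨u, huv, huw⟩ := h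
  obtain ⟨p, hp, -⟩ := hT.existsUnique_path r u
  have hv : v ∈ p.support := huv p hp
  have hw : w ∈ p.support := huw p hp
  rcases mem_takeUntil_or' p v w hv hw with h1 | h1
  · exact Or.inl (desc_subset' (mem_desc_of_path' hT (hp.takeUntil hv) h1))
  · exact Or.inr (desc_subset' (mem_desc_of_path' hT (hp.takeUntil hw) h1))

end helpers

theorem stmt13 {V : Type*} [Fintype V] (G T : SimpleGraph V) (hT : T.IsTree)
    (hTG : T ≤ G) (r : V) (k : ℕ) (hk : 3 ≤ k) (x : Fin k → V)
    (hinj : Function.Injective x) (hroot : ∀ i, x i ≠ r)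
    (h₁ : ∃ i j : Fin k, i ≠ j ∧ (desc T r (x i) ∩ desc T r (x j)).Nonempty)
    (h₂ : ∀ i : Fin k, ∃ j : Fin k, x j ∉ desc T r (x i)) :
    ∃ a : Fin k,
      (⋂ i, cut G (desc T r (x i))) =
        (⋂ i, ⋂ (_ : i ≠ a), cut G (desc T r (x i))) ∧
      (⋂ i, cut G (desc T r (x i))).ncard =
        (⋂ i, ⋂ (_ : i ≠ a), cut G (desc T r (x i))).ncard := by
  classical
  set D : Fin k → Set V := fun i => desc T r (x i) with hD
  have hself : ∀ i, x i ∈ D i := fun i => mem_desc_self' (x i)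
  have hne : ∀ i j : Fin k, D i = D j → i = j := by
    intro i j hij
    apply hinj
    have h1 := hself i; have h2 := hself j
    rw [hij] at h1; rw [← hij] at h2
    exact desc_antisymm' hT h1 h2
  -- from h₁, get a proper subset pair
  have hpair : ∃ p q : Fin k, D p ⊂ D q := by
    obtain ⟨i, j, hij, hint⟩ := h₁
    rcases desc_laminar' hT hint with h | h
    · exact ⟨i, j, h.ssubset_of_ne (fun he => hij (hne _ _ he))⟩
    · exact ⟨j, i, h.ssubset_of_ne (fun he => hij.symm (hne _ _ he))⟩
  -- pick q maximal (by ncard) among indices whose set properly contains some other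
  set S : Finset (Fin k) := Finset.univ.filter (fun i => ∃ p, D p ⊂ D i) with hS
  have hSne : S.Nonempty := by
    obtain ⟨p, q, h⟩ := hpair
    exact ⟨q, by simp [hS]; exact ⟨p, h⟩⟩
  obtain ⟨q, hqS, hqmax⟩ := S.exists_max_image (fun i => (D i).ncard) hSne
  obtain ⟨p, hpq⟩ : ∃ p, D p ⊂ D q := by simpa [hS] using hqS
  have hmax : ∀ m, ¬ D q ⊂ D m := by
    intro m hm
    have hmS : m ∈ S := by
      simp only [hS, Finset.mem_filter, Finset.mem_univ, true_and]
      exact ⟨p, hpq.trans hm⟩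
    have := hqmax m hmS
    exact absurd this (not_le.mpr (Set.ncard_lt_ncard hm (Set.toFinite _)))
  -- from h₂ at q, get a set disjoint from D q
  obtain ⟨m, hm⟩ := h₂ q
  have hdisj : ∀ z, z ∈ D m → z ∉ D q := by
    intro z hzm hzq
    rcases desc_laminar' hT ⟨z, hzm, hzq⟩ with h | h
    · exact hm (h (hself m))
    · rcases eq_or_ne (D q) (D m) with he | hne'
      · have := hself m; rw [← he] at this; exact hm this
      · exact hmax m (h.ssubset_of_ne hne')
  have hpq' : p ≠ q := fun h => hpq.ne (h ▸ rfl)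
  have hmq : m ≠ q := fun h => hm (h ▸ hself m)
  have heq : (⋂ i, cut G (desc T r (x i))) =
      (⋂ i, ⋂ (_ : i ≠ q), cut G (desc T r (x i))) := by
    apply Set.eq_of_subset_of_subset
    · exact Set.iInter_mono fun i => Set.subset_iInter fun _ => le_refl _
    · intro e he
      simp only [Set.mem_iInter] at he ⊢
      intro i
      rcases eq_or_ne i q with rfl | hiq
      · obtain ⟨heG, u, w, hew, hu, hw⟩ := he p hpq'
        obtain ⟨-, u', w', hew', hu', hw'⟩ := he m hmq
        rw [hew] at hew'
        rcases (Sym2.eq_iff.mp hew') with ⟨h1, h2⟩ | ⟨h1, h2⟩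
        · exact absurd (hpq.le hu) (hdisj u (h1 ▸ hu'))
        · refine ⟨heG, u, w, hew, hpq.le hu, hdisj w (h2 ▸ hu')⟩
      · exact he i hiq
  exact ⟨q, heq, congrArg Set.ncard heq⟩
end
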